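/- (Van Loan's lemma, time-inhomogeneous version.) For continuous matrix functions A(x) (m×m), C(x) (n×n), and B(x) (m×n), the product integral of the block upper-triangular matrix [[A(x), B(x)],[0, C(x)]] from s to t equals the block matrix [[F_A(s,t), ∫_s^t F_A(s,u) B(u) F_C(u,t) du],[0, F_C(s,t)]], where F_A(s,t) = ∏_s^t (I + A(x) dx) and F_C(s,t) = ∏_s^t (I + C(x) dx). -/

import Mathlib

open Matrix MeasureTheory

attribute [local instance] Matrix.linftyOpNormedAddCommGroup Matrix.linftyOpNormedSpace
  Matrix.linftyOpNormedRing Matrix.linftyOpNormedAlgebra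

section Aux

variable {a b c : ℕ}

lemma matMul_isBoundedBilinearMap :
    IsBoundedBilinearMap ℝ
      (fun p : Matrix (Fin a) (Fin b) ℝ × Matrix (Fin b) (Fin c) ℝ => p.1 * p.2) where
  add_left x y z := Matrix.add_mul x y z
  smul_left r x y := Matrix.smul_mul r x y
  add_right x y z := Matrix.mul_add x y z
  smul_right r x y := Matrix.mul_smul x r y
  bound := ⟨1, one_pos, fun x y => by simpa using Matrix.linfty_opNorm_mul x y⟩

lemma HasDerivAt.matMul {f : ℝ → Matrix (Fin a) (Fin b) ℝ} {g : ℝ → Matrix (Fin b) (Fin c) ℝ}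
    {f' : Matrix (Fin a) (Fin b) ℝ} {g' : Matrix (Fin b) (Fin c) ℝ} {x : ℝ}
    (hf : HasDerivAt f f' x) (hg : HasDerivAt g g' x) :
    HasDerivAt (fun t => f t * g t) (f' * g x + f x * g') x := by
  have h := (matMul_isBoundedBilinearMap.hasFDerivAt (f x, g x)).comp_hasDerivAt x (hf.prodMk hg)
  simp only [IsBoundedBilinearMap.deriv_apply, add_comm, Function.comp_def] at h
  exact h

lemma Continuous.matMul' {f : ℝ → Matrix (Fin a) (Fin b) ℝ} {g : ℝ → Matrix (Fin b) (Fin c) ℝ}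
    (hf : Continuous f) (hg : Continuous g) : Continuous fun t => f t * g t :=
  matMul_isBoundedBilinearMap.continuous.comp (hf.prodMk hg)

/-- `fromBlocks` with lower-left block `0`, as a continuous linear map. -/
noncomputable def blockL (m n : ℕ) :
    (Matrix (Fin m) (Fin m) ℝ × Matrix (Fin m) (Fin n) ℝ × Matrix (Fin n) (Fin n) ℝ) →L[ℝ]
      Matrix (Fin m ⊕ Fin n) (Fin m ⊕ Fin n) ℝ :=
  LinearMap.toContinuousLinearMap
    { toFun := fun p => Matrix.fromBlocks p.1 p.2.1 0 p.2.2
      map_add' := fun p q => by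
        simp [Matrix.fromBlocks_add]
      map_smul' := fun r p => by
        simp [Matrix.fromBlocks_smul] }

lemma hasDerivAt_fromBlocks {m n : ℕ} {fa : ℝ → Matrix (Fin m) (Fin m) ℝ}
    {fb : ℝ → Matrix (Fin m) (Fin n) ℝ} {fc : ℝ → Matrix (Fin n) (Fin n) ℝ}
    {fa' : Matrix (Fin m) (Fin m) ℝ} {fb' : Matrix (Fin m) (Fin n) ℝ}
    {fc' : Matrix (Fin n) (Fin n) ℝ} {x : ℝ}
    (ha : HasDerivAt fa fa' x) (hb : HasDerivAt fb fb' x) (hc : HasDerivAt fc fc' x) :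
    HasDerivAt (fun t => Matrix.fromBlocks (fa t) (fb t) 0 (fc t))
      (Matrix.fromBlocks fa' fb' 0 fc') x := by
  have h := ((blockL m n).hasFDerivAt (x := (fa x, fb x, fc x))).comp_hasDerivAt x
    (ha.prodMk (hb.prodMk hc))
  simp only [Function.comp_def] at h
  exact h

lemma continuous_fromBlocks {m n : ℕ} {fa : ℝ → Matrix (Fin m) (Fin m) ℝ}
    {fb : ℝ → Matrix (Fin m) (Fin n) ℝ} {fc : ℝ → Matrix (Fin n) (Fin n) ℝ}
    (ha : Continuous fa) (hb : Continuous fb) (hc : Continuous fc) :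
    Continuous fun t => Matrix.fromBlocks (fa t) (fb t) 0 (fc t) := by
  have h := (blockL m n).continuous.comp (ha.prodMk (hb.prodMk hc))
  simpa [blockL, Function.comp_def] using h

/-- Uniqueness of solutions to the linear matrix ODE `f' = f * M t`. -/
lemma matODE_unique {ι : Type*} [Fintype ι] [DecidableEq ι]
    (M : ℝ → Matrix ι ι ℝ) (hM : Continuous M) {f g : ℝ → Matrix ι ι ℝ}
    (hf : ∀ t, HasDerivAt f (f t * M t) t) (hg : ∀ t, HasDerivAt g (g t * M t) t)
    {t₀ : ℝ} (h0 : f t₀ = g t₀) : ∀ t, f t = g t := by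
  intro t
  set a : ℝ := min t₀ t - 1 with ha
  set b : ℝ := max t₀ t + 1 with hb
  have hab : a ≤ b := by
    have := min_le_max (a := t₀) (b := t); simp only [ha, hb]; linarith
  obtain ⟨L, hL⟩ := isCompact_Icc.exists_bound_of_continuousOn (hM.continuousOn (s := Set.Icc a b))
  set K : NNReal := ⟨max L 0, le_max_right _ _⟩ with hK
  set clamp : ℝ → ℝ := fun u => max a (min u b) with hclamp
  have hclamp_mem : ∀ u, clamp u ∈ Set.Icc a b := by
    intro u
    refine ⟨le_max_left _ _, max_le hab (min_le_right _ _)⟩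
  have hclamp_eq : ∀ u ∈ Set.Icc a b, clamp u = u := by
    intro u hu
    simp [hclamp, min_eq_left hu.2, max_eq_right hu.1]
  set v : ℝ → Matrix ι ι ℝ → Matrix ι ι ℝ := fun u x => x * M (clamp u) with hv
  have hlip : ∀ u, LipschitzOnWith K (v u) Set.univ := by
    intro u
    refine LipschitzOnWith.of_dist_le_mul fun x _ y _ => ?_
    have h1 : ‖M (clamp u)‖ ≤ max L 0 := le_trans (hL _ (hclamp_mem u)) (le_max_left _ _)
    calc dist (v u x) (v u y) = ‖x * M (clamp u) - y * M (clamp u)‖ := dist_eq_norm _ _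
      _ = ‖(x - y) * M (clamp u)‖ := by rw [Matrix.sub_mul]
      _ ≤ ‖x - y‖ * ‖M (clamp u)‖ := Matrix.linfty_opNorm_mul _ _
      _ ≤ ‖x - y‖ * max L 0 := mul_le_mul_of_nonneg_left h1 (norm_nonneg _)
      _ = (K : ℝ) * dist x y := by
          rw [dist_eq_norm, show ((K : ℝ)) = max L 0 from rfl]; ring
  have ht₀ : t₀ ∈ Set.Ioo a b := by
    constructor
    · have := min_le_left t₀ t; simp only [ha]; linarith
    · have := le_max_left t₀ t; simp only [hb]; linarith
  have ht : t ∈ Set.Icc a b := by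
    constructor
    · have := min_le_right t₀ t; simp only [ha]; linarith
    · have := le_max_right t₀ t; simp only [hb]; linarith
  have key := ODE_solution_unique_of_mem_Icc (s := fun _ => Set.univ) (fun u _ => hlip u) ht₀
    (fun u _ => (hf u).continuousAt.continuousWithinAt)
    (fun u hu => by
      have := hf u
      rwa [show f u * M u = v u (f u) by rw [hv]; simp [hclamp_eq u (Set.Ioo_subset_Icc_self hu)]]
        at this)
    (fun _ _ => Set.mem_univ _)
    (fun u _ => (hg u).continuousAt.continuousWithinAt)
    (fun u hu => by
      have := hg u
      rwa [show g u * M u = v u (g u) by rw [hv]; simp [hclamp_eq u (Set.Ioo_subset_Icc_self hu)]]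
        at this)
    (fun _ _ => Set.mem_univ _) h0
  exact key ht

/-- Cocycle property for solutions of the forward linear ODE. -/
lemma matODE_cocycle {ι : Type*} [Fintype ι] [DecidableEq ι]
    (M : ℝ → Matrix ι ι ℝ) (hM : Continuous M) (F : ℝ → ℝ → Matrix ι ι ℝ)
    (hF : ∀ s t, HasDerivAt (fun u => F s u) (F s t * M t) t)
    (hF0 : ∀ s, F s s = 1) :
    ∀ s r t, F s t = F s r * F r t := by
  intro s r t
  have hg : ∀ t, HasDerivAt (fun u => F s r * F r u) ((F s r * F r t) * M t) t := by
    intro t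
    rw [mul_assoc]; exact (hF r t).const_mul (F s r)
  exact matODE_unique M hM (hF s) hg (t₀ := r) (by simp [hF0 r]) t

end Aux

/-- **Van Loan's lemma, time-inhomogeneous version.** For continuous matrix
functions `A` (`m × m`), `C` (`n × n`) and `B` (`m × n`), the product integral of the block
upper-triangular matrix `[[A x, B x], [0, C x]]` from `s` to `t` equals
`[[F_A (s,t), ∫_s^t F_A (s,u) * B u * F_C (u,t) du], [0, F_C (s,t)]]`, where `F_A`, `F_C`
are the product integrals of `A` and `C` (solutions of the forward equation with initial
value `1`). -/
theorem productIntegral_fromBlocks {m n : ℕ}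
    (A : ℝ → Matrix (Fin m) (Fin m) ℝ) (B : ℝ → Matrix (Fin m) (Fin n) ℝ)
    (C : ℝ → Matrix (Fin n) (Fin n) ℝ)
    (hA : Continuous A) (hB : Continuous B) (hC : Continuous C)
    (FA : ℝ → ℝ → Matrix (Fin m) (Fin m) ℝ) (FC : ℝ → ℝ → Matrix (Fin n) (Fin n) ℝ)
    (hFA : ∀ s t : ℝ, HasDerivAt (fun u => FA s u) (FA s t * A t) t)
    (hFA0 : ∀ s : ℝ, FA s s = 1)
    (hFC : ∀ s t : ℝ, HasDerivAt (fun u => FC s u) (FC s t * C t) t)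
    (hFC0 : ∀ s : ℝ, FC s s = 1)
    (G : ℝ → ℝ → Matrix (Fin m ⊕ Fin n) (Fin m ⊕ Fin n) ℝ)
    (hG : ∀ s t : ℝ,
      HasDerivAt (fun u => G s u) (G s t * Matrix.fromBlocks (A t) (B t) 0 (C t)) t)
    (hG0 : ∀ s : ℝ, G s s = 1) :
    ∀ s t : ℝ,
      G s t = Matrix.fromBlocks (FA s t)
        (∫ u in s..t, FA s u * B u * FC u t) 0 (FC s t) := by
  intro s t
  -- cocycle properties
  have cocC := matODE_cocycle C hC FC hFC hFC0
  -- `FC u s * FC s u = 1` and `FC s u * FC u s = 1`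
  have hinv1 : ∀ u, FC s u * FC u s = 1 := fun u => by rw [← cocC s u s, hFC0]
  have hinv2 : ∀ u, FC u s * FC s u = 1 := fun u => by rw [← cocC u s u, hFC0]
  -- units
  set U : ℝ → (Matrix (Fin n) (Fin n) ℝ)ˣ := fun u => ⟨FC s u, FC u s, hinv1 u, hinv2 u⟩ with hU
  -- continuity facts
  have hFAc : Continuous (fun u => FA s u) :=
    continuous_iff_continuousAt.2 fun u => (hFA s u).continuousAt
  have hFCc : Continuous (fun u => FC s u) :=
    continuous_iff_continuousAt.2 fun u => (hFC s u).continuousAt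
  have hFCinvc : Continuous (fun u => FC u s) := by
    have heq : (fun u => FC u s) = fun u => Ring.inverse (FC s u) := by
      funext u
      rw [show FC s u = ((U u : (Matrix (Fin n) (Fin n) ℝ)ˣ) : Matrix (Fin n) (Fin n) ℝ) from rfl,
        Ring.inverse_unit]
      rfl
    rw [heq]
    exact continuous_iff_continuousAt.2 fun u =>
      ContinuousAt.comp (x := u) (f := fun u => FC s u) (g := Ring.inverse)
        (NormedRing.inverse_continuousAt (U u)) hFCc.continuousAt
  -- the integrand with fixed right endpoint
  set h : ℝ → Matrix (Fin m) (Fin n) ℝ := fun u => FA s u * B u * FC u s with hh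
  have hhc : Continuous h := (hFAc.matMul' hB).matMul' hFCinvc
  set J : ℝ → Matrix (Fin m) (Fin n) ℝ := fun t => ∫ u in s..t, h u with hJ
  haveI : TopologicalSpace.PseudoMetrizableSpace (Matrix (Fin m) (Fin n) ℝ) :=
    inferInstanceAs (TopologicalSpace.PseudoMetrizableSpace (Fin m → Fin n → ℝ))
  have hJd : ∀ t, HasDerivAt J (h t) t := fun t =>
    intervalIntegral.integral_hasDerivAt_right (hhc.intervalIntegrable s t)
      hhc.aestronglyMeasurable.stronglyMeasurableAtFilter hhc.continuousAt
  -- right multiplication CLM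
  have keyJ : ∀ t, (∫ u in s..t, FA s u * B u * FC u t) = J t * FC s t := by
    intro t
    set R : Matrix (Fin m) (Fin n) ℝ →L[ℝ] Matrix (Fin m) (Fin n) ℝ :=
      LinearMap.toContinuousLinearMap
        { toFun := fun X => X * FC s t
          map_add' := fun x y => Matrix.add_mul x y _
          map_smul' := fun r x => Matrix.smul_mul r x _ } with hR
    have h1 : (∫ u in s..t, FA s u * B u * FC u t) = ∫ u in s..t, R (h u) := by
      congr 1
      funext u
      show FA s u * B u * FC u t = FA s u * B u * FC u s * FC s t
      rw [cocC u s t, ← Matrix.mul_assoc]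
    rw [h1]
    exact (R.intervalIntegral_comp_comm (hhc.intervalIntegrable s t)).trans rfl
  -- the candidate solution
  set K : ℝ → Matrix (Fin m ⊕ Fin n) (Fin m ⊕ Fin n) ℝ :=
    fun t => Matrix.fromBlocks (FA s t) (J t * FC s t) 0 (FC s t) with hKdef
  have hKd : ∀ t, HasDerivAt K (K t * Matrix.fromBlocks (A t) (B t) 0 (C t)) t := by
    intro t
    have hmid := (hJd t).matMul (hFC s t)
    have e : h t * FC s t + J t * (FC s t * C t) = FA s t * B t + J t * FC s t * C t := by
      show FA s t * B t * FC t s * FC s t + J t * (FC s t * C t) = _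
      rw [Matrix.mul_assoc (FA s t * B t), hinv2 t, Matrix.mul_one, ← Matrix.mul_assoc]
    rw [e] at hmid
    have hd := hasDerivAt_fromBlocks (hFA s t) hmid (hFC s t)
    have hval : Matrix.fromBlocks (FA s t * A t) (FA s t * B t + J t * FC s t * C t) 0
        (FC s t * C t) = K t * Matrix.fromBlocks (A t) (B t) 0 (C t) := by
      rw [hKdef, Matrix.fromBlocks_multiply]
      simp only [Matrix.mul_zero, Matrix.zero_mul, add_zero, zero_add]
    rw [← hval]
    exact hd
  have hK0 : K s = 1 := by
    rw [hKdef]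
    simp only [hJ]
    rw [intervalIntegral.integral_same, Matrix.zero_mul, hFA0, hFC0, Matrix.fromBlocks_one]
  have main := matODE_unique (fun t => Matrix.fromBlocks (A t) (B t) 0 (C t))
    (continuous_fromBlocks hA hB hC) (hG s) hKd (t₀ := s) (by rw [hG0, hK0]) t
  rw [main, hKdef, keyJ t]
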